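/- Let R be an associative unital ℂ-algebra and n ≥ 2. Then 𝔰𝔩_n(R) decomposes as an internal direct sum of ℂ-subspaces 𝔰𝔩_n(R) = N⁻ ⊕ H ⊕ N⁺, where N⁻ (resp. N⁺) is the space of strictly lower (resp. strictly upper) triangular n×n matrices over R, and H is the space of diagonal n×n matrices over R whose trace lies in the ℂ-linear span of the commutators {ab − ba : a, b ∈ R}. -/

import Mathlib

/-!
STATEMENT 1: For an associative unital ℂ-algebra `R` and `n ≥ 2`,
`𝔰𝔩_n(R)` (the ℂ-linear span of brackets of `n × n` matrices over `R`) decomposes as an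
internal direct sum `N⁻ ⊕ H ⊕ N⁺` of ℂ-subspaces, where `N⁻` (resp. `N⁺`) consists of
the strictly lower (resp. strictly upper) triangular matrices and `H` consists of the
diagonal matrices whose trace lies in the span of commutators of `R`.
-/

/-- The ℂ-linear span of commutators of `R`. -/
def commSpan (R : Type) [Ring R] [Algebra ℂ R] : Submodule ℂ R :=
  Submodule.span ℂ {c : R | ∃ a b, c = a * b - b * a}

/-- Strictly lower triangular `n × n` matrices over `R`. -/
def strictLower (R : Type) [Ring R] [Algebra ℂ R] (n : ℕ) :
    Submodule ℂ (Matrix (Fin n) (Fin n) R) where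
  carrier := {X | ∀ i j : Fin n, i ≤ j → X i j = 0}
  add_mem' {a b} ha hb i j h := by simp [Matrix.add_apply, ha i j h, hb i j h]
  zero_mem' i j h := by simp
  smul_mem' c X hX i j h := by simp [Matrix.smul_apply, hX i j h]

/-- Strictly upper triangular `n × n` matrices over `R`. -/
def strictUpper (R : Type) [Ring R] [Algebra ℂ R] (n : ℕ) :
    Submodule ℂ (Matrix (Fin n) (Fin n) R) where
  carrier := {X | ∀ i j : Fin n, j ≤ i → X i j = 0}
  add_mem' {a b} ha hb i j h := by simp [Matrix.add_apply, ha i j h, hb i j h]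
  zero_mem' i j h := by simp
  smul_mem' c X hX i j h := by simp [Matrix.smul_apply, hX i j h]

/-- Diagonal `n × n` matrices over `R` whose trace lies in the span of commutators. -/
def diagComm (R : Type) [Ring R] [Algebra ℂ R] (n : ℕ) :
    Submodule ℂ (Matrix (Fin n) (Fin n) R) where
  carrier := {X | (∀ i j : Fin n, i ≠ j → X i j = 0) ∧ X.trace ∈ commSpan R}
  add_mem' {a b} ha hb := by
    refine ⟨fun i j h => by simp [Matrix.add_apply, ha.1 i j h, hb.1 i j h], ?_⟩
    rw [Matrix.trace_add]
    exact (commSpan R).add_mem ha.2 hb.2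
  zero_mem' := ⟨fun i j h => by simp, by simp [Matrix.trace_zero]⟩
  smul_mem' c X hX := by
    refine ⟨fun i j h => by simp [Matrix.smul_apply, hX.1 i j h], ?_⟩
    rw [Matrix.trace_smul]
    exact (commSpan R).smul_mem c hX.2


open Matrix

section Aux
variable {R : Type} [Ring R] [Algebra ℂ R] {n : ℕ}

/-- The linear map sending `r` to the elementary matrix with `r` in position `(i,j)`. -/
def Eij (i j : Fin n) : R →ₗ[ℂ] Matrix (Fin n) (Fin n) R where
  toFun r := Matrix.single i j r
  map_add' a b := Matrix.single_add i j a b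
  map_smul' c a := (Matrix.smul_single c i j a).symm

def SLset (R : Type) [Ring R] [Algebra ℂ R] (n : ℕ) : Submodule ℂ (Matrix (Fin n) (Fin n) R) :=
  Submodule.span ℂ {X : Matrix (Fin n) (Fin n) R | ∃ A B, X = A * B - B * A}

local notation "SL" => SLset R n

lemma comm_mem_SL (A B : Matrix (Fin n) (Fin n) R) : A * B - B * A ∈ SL :=
  Submodule.subset_span (R := ℂ) ⟨A, B, rfl⟩

lemma offdiag_mem_SL {i j : Fin n} (h : i ≠ j) (r : R) :
    Matrix.single i j r ∈ SL := by
  have key : Matrix.single i j r =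
      Matrix.single i j r * Matrix.single j j (1 : R)
        - Matrix.single j j (1 : R) * Matrix.single i j r := by
    rw [Matrix.single_mul_single_same, Matrix.single_mul_single_of_ne (h := h.symm)]
    simp
  rw [key]; exact comm_mem_SL _ _

lemma diagdiff_mem_SL {i j : Fin n} (h : i ≠ j) (a : R) :
    Matrix.single i i a - Matrix.single j j a ∈ SL := by
  have key : Matrix.single i i a - Matrix.single j j a =
      Matrix.single i j a * Matrix.single j i (1 : R)
        - Matrix.single j i (1 : R) * Matrix.single i j a := by
    rw [Matrix.single_mul_single_same, Matrix.single_mul_single_same]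
    simp
  rw [key]; exact comm_mem_SL _ _

lemma diagComm_entry_mem_SL (i : Fin n) {c : R} (hc : c ∈ commSpan R) :
    Matrix.single i i c ∈ SL := by
  induction hc using Submodule.span_induction with
  | mem x hx =>
      obtain ⟨a, b, rfl⟩ := hx
      have : Matrix.single i i (a * b - b * a) =
          Matrix.single i i a * Matrix.single i i b
            - Matrix.single i i b * Matrix.single i i a := by
        rw [Matrix.single_mul_single_same, Matrix.single_mul_single_same]
        exact map_sub (Eij i i) (a * b) (b * a)
      rw [this]; exact comm_mem_SL _ _
  | zero => rw [Matrix.single_zero]; exact Submodule.zero_mem _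
  | add x y _ _ hx hy =>
      rw [Matrix.single_add]; exact Submodule.add_mem _ hx hy
  | smul c x _ hx =>
      rw [← Matrix.smul_single]; exact Submodule.smul_mem _ _ hx

lemma trace_mem_commSpan {X : Matrix (Fin n) (Fin n) R} (hX : X ∈ SL) :
    X.trace ∈ commSpan R := by
  induction hX using Submodule.span_induction with
  | mem x hx =>
      obtain ⟨A, B, rfl⟩ := hx
      have : (A * B - B * A).trace
          = ∑ i : Fin n, ∑ k : Fin n, (A i k * B k i - B k i * A i k) := by
        rw [Matrix.trace_sub]
        simp only [Matrix.trace, Matrix.diag_apply, Matrix.mul_apply,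
          Finset.sum_sub_distrib]
        congr 1
        rw [Finset.sum_comm]
      rw [this]
      exact Submodule.sum_mem _ fun i _ => Submodule.sum_mem _ fun k _ =>
        Submodule.subset_span ⟨_, _, rfl⟩
  | zero => simp
  | add x y _ _ hx hy => rw [Matrix.trace_add]; exact Submodule.add_mem _ hx hy
  | smul c x _ hx => rw [Matrix.trace_smul]; exact Submodule.smul_mem _ _ hx

lemma strictLower_le_SL : strictLower R n ≤ SL := by
  intro X hX
  rw [Matrix.matrix_eq_sum_single X]
  refine Submodule.sum_mem _ fun i _ => Submodule.sum_mem _ fun j _ => ?_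
  rcases le_or_gt i j with h | h
  · rw [hX i j h, Matrix.single_zero]; exact Submodule.zero_mem _
  · exact offdiag_mem_SL (ne_of_gt h) _

lemma strictUpper_le_SL : strictUpper R n ≤ SL := by
  intro X hX
  rw [Matrix.matrix_eq_sum_single X]
  refine Submodule.sum_mem _ fun i _ => Submodule.sum_mem _ fun j _ => ?_
  rcases le_or_gt j i with h | h
  · rw [hX i j h, Matrix.single_zero]; exact Submodule.zero_mem _
  · exact offdiag_mem_SL (ne_of_lt h) _

lemma diagComm_le_SL (hn : 2 ≤ n) : diagComm R n ≤ SL := by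
  intro X hX
  obtain ⟨hdiag, htr⟩ := hX
  have hn0 : 0 < n := by omega
  set i0 : Fin n := ⟨0, hn0⟩ with hi0
  have hXd : X = ∑ i : Fin n, Matrix.single i i (X i i) := by
    conv_lhs => rw [Matrix.matrix_eq_sum_single X]
    refine Finset.sum_congr rfl fun i _ => ?_
    rw [Finset.sum_eq_single i]
    · intro j _ hj
      rw [hdiag i j (Ne.symm hj), Matrix.single_zero]
    · intro h; exact absurd (Finset.mem_univ i) h
  have hsplit : X = (∑ i : Fin n,
      (Matrix.single i i (X i i) - Matrix.single i0 i0 (X i i)))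
        + Matrix.single i0 i0 X.trace := by
    rw [Finset.sum_sub_distrib]
    have : ∑ i : Fin n, Matrix.single i0 i0 (X i i)
        = Matrix.single i0 i0 X.trace :=
      (map_sum (Eij i0 i0) (fun i => X i i) Finset.univ).symm
    rw [this, sub_add_cancel, ← hXd]
  rw [hsplit]
  refine Submodule.add_mem _ (Submodule.sum_mem _ fun i _ => ?_)
    (diagComm_entry_mem_SL i0 htr)
  by_cases h : i = i0
  · rw [h, sub_self]; exact Submodule.zero_mem _
  · exact diagdiff_mem_SL h _

lemma T_le_sup {X : Matrix (Fin n) (Fin n) R} (hX : X.trace ∈ commSpan R) :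
    X ∈ strictLower R n ⊔ diagComm R n ⊔ strictUpper R n := by
  set L : Matrix (Fin n) (Fin n) R := Matrix.of fun i j => if j < i then X i j else 0 with hL
  set D : Matrix (Fin n) (Fin n) R := Matrix.of fun i j => if i = j then X i j else 0 with hD
  set U : Matrix (Fin n) (Fin n) R := Matrix.of fun i j => if i < j then X i j else 0 with hU
  have hXsum : X = L + D + U := by
    ext i j
    simp only [Matrix.add_apply, hL, hD, hU, Matrix.of_apply]
    rcases lt_trichotomy i j with h | h | h
    · rw [if_neg (by omega : ¬ j < i), if_neg (by omega : ¬ i = j), if_pos h]; simp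
    · rw [if_neg (by omega : ¬ j < i), if_pos h, if_neg (by omega : ¬ i < j)]; simp
    · rw [if_pos h, if_neg (by omega : ¬ i = j), if_neg (by omega : ¬ i < j)]; simp
  have hLmem : L ∈ strictLower R n := fun i j h => by
    simp only [hL, Matrix.of_apply]; rw [if_neg (by omega : ¬ j < i)]
  have hUmem : U ∈ strictUpper R n := fun i j h => by
    simp only [hU, Matrix.of_apply]; rw [if_neg (by omega : ¬ i < j)]
  have hDmem : D ∈ diagComm R n := by
    refine ⟨fun i j h => by simp only [hD, Matrix.of_apply]; rw [if_neg h], ?_⟩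
    have : D.trace = X.trace := by
      simp only [Matrix.trace, Matrix.diag_apply, hD, Matrix.of_apply, if_pos rfl]
      simp
    rw [this]; exact hX
  rw [hXsum]
  exact Submodule.add_mem _
    (Submodule.add_mem _
      (Submodule.mem_sup_left (Submodule.mem_sup_left hLmem))
      (Submodule.mem_sup_left (Submodule.mem_sup_right hDmem)))
    (Submodule.mem_sup_right hUmem)

end Aux

theorem stmt_1 (R : Type) [Ring R] [Algebra ℂ R] (n : ℕ) (hn : 2 ≤ n) :
    Submodule.span ℂ {X : Matrix (Fin n) (Fin n) R | ∃ A B, X = A * B - B * A}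
        = strictLower R n ⊔ diagComm R n ⊔ strictUpper R n
      ∧ strictLower R n ⊓ (diagComm R n ⊔ strictUpper R n) = ⊥
      ∧ diagComm R n ⊓ (strictLower R n ⊔ strictUpper R n) = ⊥
      ∧ strictUpper R n ⊓ (strictLower R n ⊔ diagComm R n) = ⊥ := by
  have hn0 : 0 < n := by omega
  constructor
  · apply le_antisymm
    · rw [Submodule.span_le]
      rintro X ⟨A, B, rfl⟩
      exact T_le_sup (trace_mem_commSpan (comm_mem_SL A B))
    · exact sup_le (sup_le strictLower_le_SL (diagComm_le_SL hn)) strictUpper_le_SL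
  refine ⟨?_, ?_, ?_⟩
  · rw [eq_bot_iff]
    rintro X ⟨hXL, hXsup⟩
    obtain ⟨D, hD, U, hU, rfl⟩ := Submodule.mem_sup.mp hXsup
    have : D + U = 0 := by
      ext i j
      rcases le_or_gt i j with h | h
      · exact hXL i j h
      · simp [Matrix.add_apply, hD.1 i j (by omega : i ≠ j), hU i j h.le]
    simp [this]
  · rw [eq_bot_iff]
    rintro X ⟨hXD, hXsup⟩
    obtain ⟨L, hL, U, hU, rfl⟩ := Submodule.mem_sup.mp hXsup
    have : L + U = 0 := by
      ext i j
      by_cases h : i = j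
      · subst h; simp [Matrix.add_apply, hL i i le_rfl, hU i i le_rfl]
      · exact hXD.1 i j h
    simp [this]
  · rw [eq_bot_iff]
    rintro X ⟨hXU, hXsup⟩
    obtain ⟨L, hL, D, hD, rfl⟩ := Submodule.mem_sup.mp hXsup
    have : L + D = 0 := by
      ext i j
      rcases le_or_gt j i with h | h
      · exact hXU i j h
      · simp [Matrix.add_apply, hL i j h.le, hD.1 i j (by omega : i ≠ j)]
    simp [this]
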